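/- Let q be a prime power, s a divisor of q-1, d = (q-1)/s, r a positive integer, and h ∈ F_q[x]. If f(x) = x^r·h(x^s) is an involution on F_q, then g(x) = x^r·h(x)^s is an involution on the subgroup μ_d of d-th roots of unity in F_q*, i.e., g maps μ_d to μ_d and g(g(z)) = z for all z ∈ μ_d. -/

import Mathlib

-- In a finite cyclic group, every element killed by n/s is an s-th power.
lemma aux_exists_pow {G : Type*} [Group G] [Finite G] [IsCyclic G]
    {s : ℕ} (hs : s ∣ Nat.card G) (hspos : 0 < s)
    (z : G) (hz : z ^ (Nat.card G / s) = 1) : ∃ w : G, w ^ s = z := by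
  obtain ⟨γ, hγ⟩ := IsCyclic.exists_generator (α := G)
  obtain ⟨m, hm⟩ := mem_powers_iff_mem_zpowers.mpr (hγ z)
  simp only at hm
  have hord : orderOf γ = Nat.card G := orderOf_eq_card_of_forall_mem_zpowers hγ
  have h1 : γ ^ (m * (Nat.card G / s)) = 1 := by
    rw [pow_mul, hm, hz]
  have hdvd : Nat.card G ∣ m * (Nat.card G / s) := by
    rw [← hord]; rw [← hord] at h1; exact orderOf_dvd_of_pow_eq_one h1
  obtain ⟨c, hc⟩ := hs
  have hcpos : 0 < c := by
    have := Nat.card_pos (α := G)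
    by_contra h0
    simp [Nat.le_zero.mp (Nat.not_lt.mp h0)] at hc
    omega
  have hdiv : Nat.card G / s = c := by rw [hc]; exact Nat.mul_div_cancel_left c hspos
  rw [hdiv, hc] at hdvd
  obtain ⟨k, hk⟩ := hdvd
  have hm' : m = s * k := by
    have : c * m = c * (s * k) := by
      have : m * c = s * c * k := hk
      calc c * m = m * c := by ring
        _ = s * c * k := this
        _ = c * (s * k) := by ring
    exact Nat.eq_of_mul_eq_mul_left hcpos this
  exact ⟨γ ^ k, by rw [← pow_mul, mul_comm, ← hm', hm]⟩

theorem stmt_1 (F : Type*) [Field F] [Fintype F]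
    (r s d : ℕ) (hr : 0 < r) (hs : s ∣ Fintype.card F - 1) (hspos : 0 < s)
    (hd : d = (Fintype.card F - 1) / s)
    (h : Polynomial F)
    (f g : F → F)
    (hf : ∀ x, f x = x ^ r * h.eval (x ^ s))
    (hg : ∀ x, g x = x ^ r * (h.eval x) ^ s)
    (hinv : ∀ x : F, f (f x) = x) :
    ∀ z : F, z ^ d = 1 → (g z) ^ d = 1 ∧ g (g z) = z := by
  intro z hz
  -- conjugation identity
  have key : ∀ x : F, g (x ^ s) = (f x) ^ s := by
    intro x
    rw [hg, hf, mul_pow, ← pow_mul, ← pow_mul, mul_comm r s, mul_comm s r]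
  have hcard : Nat.card Fˣ = Fintype.card F - 1 := by rw [Nat.card_units, Nat.card_eq_fintype_card]
  -- z ≠ 0
  have hdpos : 0 < d := by
    have h2 : 2 ≤ Fintype.card F := Fintype.one_lt_card
    have : 0 < Fintype.card F - 1 := by omega
    rw [hd]
    exact Nat.div_pos (Nat.le_of_dvd this hs) hspos
  have hz0 : z ≠ 0 := by
    intro h0; rw [h0, zero_pow hdpos.ne'] at hz; exact zero_ne_one hz
  -- lift to units and get s-th root
  set zu : Fˣ := Units.mk0 z hz0 with hzu
  have hzu1 : zu ^ (Nat.card Fˣ / s) = 1 := by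
    rw [hcard, ← hd]
    ext
    push_cast
    simpa [hzu] using hz
  obtain ⟨wu, hwu⟩ := aux_exists_pow (by rw [hcard]; exact hs) hspos zu hzu1
  set w : F := (wu : F) with hw
  have hws : w ^ s = z := by
    have := congrArg (Units.val) hwu
    push_cast at this
    simpa [hw, hzu] using this
  -- f w ≠ 0 : f is injective (involution) and f 0 = 0
  have hf0 : f 0 = 0 := by rw [hf]; simp [zero_pow hr.ne']
  have hw0 : w ≠ 0 := wu.ne_zero
  have hfw0 : f w ≠ 0 := by
    intro h0
    apply hw0
    have := hinv w
    rw [h0, hf0] at this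
    exact this.symm
  have hgz : g z = (f w) ^ s := by rw [← hws, key]
  constructor
  · rw [hgz, ← pow_mul]
    have : s * d = Fintype.card F - 1 := by
      rw [hd]; exact Nat.mul_div_cancel' hs
    rw [this]
    exact FiniteField.pow_card_sub_one_eq_one _ hfw0
  · rw [hgz, key, hinv, hws]
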